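/- Let C be a self-dual linear code of length n over F_q (so that C^⊥ = C, where C^⊥ is the dual code with respect to the standard inner product). Then the matrix q^{−1/2}·[[1, q−1],[1, −1]] lies in the stabilizer in GL_2(C) of the homogeneous weight enumerator W_C(x,y). -/

import Mathlib

open Finset

noncomputable def homWeightEnum (R : Type*) [CommRing R] {F : Type*} [Field F] [Fintype F]
    [DecidableEq F] {ι : Type*} [Fintype ι] (C : Submodule F (ι → F)) : MvPolynomial (Fin 2) R :=
  ∑ c ∈ (Set.toFinite (C : Set (ι → F))).toFinset,
    MvPolynomial.X 0 ^ (Fintype.card ι - hammingNorm c) * MvPolynomial.X 1 ^ hammingNorm c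

noncomputable def matAct (A : Matrix (Fin 2) (Fin 2) ℂ) (p : MvPolynomial (Fin 2) ℂ) :
    MvPolynomial (Fin 2) ℂ :=
  MvPolynomial.aeval
    (fun i => MvPolynomial.C (A i 0) * MvPolynomial.X 0 + MvPolynomial.C (A i 1) * MvPolynomial.X 1) p

def dualCode {F : Type*} [Field F] {ι : Type*} [Fintype ι] (C : Submodule F (ι → F)) :
    Submodule F (ι → F) where
  carrier := {v | ∀ c ∈ C, ∑ i, v i * c i = 0}
  add_mem' := by
    intro a b ha hb c hc
    simp only [Pi.add_apply, add_mul, Finset.sum_add_distrib, ha c hc, hb c hc, add_zero]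
  zero_mem' := by intro c hc; simp
  smul_mem' := by
    intro t v hv c hc
    simp only [Pi.smul_apply, smul_eq_mul, mul_assoc, ← Finset.mul_sum, hv c hc, mul_zero]

section Aux

variable {F : Type*} [Field F] [Fintype F] [DecidableEq F] {n : ℕ}

private lemma addChar_map_sum {ι : Type*} (χ : AddChar F ℂ) (s : Finset ι) (f : ι → F) :
    χ (∑ i ∈ s, f i) = ∏ i ∈ s, χ (f i) := by
  induction s using Finset.cons_induction with
  | empty => simp
  | cons a s ha ih => rw [Finset.sum_cons, Finset.prod_cons, AddChar.map_add_eq_mul, ih]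

private lemma prod_ite_weight (u : Fin n → F) (x y : ℂ) :
    (∏ i, (if u i = 0 then x else y)) = x ^ (n - hammingNorm u) * y ^ hammingNorm u := by
  rw [Finset.prod_ite, Finset.prod_const, Finset.prod_const]
  have h1 : (Finset.univ.filter fun i => ¬ u i = 0).card = hammingNorm u := by
    simp [hammingNorm]
  have h2 : (Finset.univ.filter fun i => u i = 0).card = n - hammingNorm u := by
    have := Finset.card_filter_add_card_filter_not (s := (Finset.univ : Finset (Fin n)))
      (p := fun i => u i = 0)
    rw [h1] at this
    simp only [Finset.card_univ, Fintype.card_fin] at this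
    have h3 : hammingNorm u ≤ n := by
      simpa using hammingNorm_le_card_fintype (x := u)
    omega
  rw [h1, h2]

private lemma mem_codeFinset (C : Submodule F (Fin n → F)) (c : Fin n → F) :
    c ∈ (Set.toFinite (C : Set (Fin n → F))).toFinset ↔ c ∈ C :=
  Set.Finite.mem_toFinset _

/-- character sum over the code, case u ∈ dual -/
private lemma char_sum_mem (C : Submodule F (Fin n → F)) (χ : AddChar F ℂ)
    {u : Fin n → F} (hu : u ∈ dualCode C) :
    ∑ c ∈ (Set.toFinite (C : Set (Fin n → F))).toFinset, χ (∑ i, u i * c i) =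
      ((Set.toFinite (C : Set (Fin n → F))).toFinset.card : ℂ) := by
  rw [Finset.sum_congr rfl (fun c hc => ?_), Finset.sum_const, nsmul_eq_mul, mul_one]
  rw [hu c ((mem_codeFinset C c).1 hc), AddChar.map_zero_eq_one]

private lemma char_sum_not_mem (C : Submodule F (Fin n → F)) (χ : AddChar F ℂ)
    (hχ : χ.IsPrimitive) {u : Fin n → F} (hu : u ∉ dualCode C) :
    ∑ c ∈ (Set.toFinite (C : Set (Fin n → F))).toFinset, χ (∑ i, u i * c i) = 0 := by
  have hmem := mem_codeFinset C
  -- find c1 ∈ C with χ (∑ u i * c1 i) ≠ 1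
  have hu' : ¬ ∀ c ∈ C, ∑ i, u i * c i = 0 := hu
  push_neg at hu'
  obtain ⟨c0, hc0, ha⟩ := hu'
  obtain ⟨t, ht⟩ := AddChar.ne_one_iff.1 (hχ ha)
  rw [AddChar.mulShift_apply] at ht
  set c1 : Fin n → F := t • c0 with hc1def
  have hc1 : c1 ∈ C := C.smul_mem t hc0
  have hb : (∑ i, u i * c1 i) = (∑ i, u i * c0 i) * t := by
    rw [Finset.sum_mul]
    refine Finset.sum_congr rfl fun i _ => ?_
    simp [hc1def, Pi.smul_apply, smul_eq_mul]; ring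
  set S := ∑ c ∈ (Set.toFinite (C : Set (Fin n → F))).toFinset, χ (∑ i, u i * c i) with hS
  have key : χ (∑ i, u i * c1 i) * S = S := by
    rw [hS, Finset.mul_sum]
    refine Finset.sum_nbij' (i := fun c => c1 + c) (j := fun c => c - c1) ?_ ?_ ?_ ?_ ?_
    · intro a haa; exact (hmem _).2 (C.add_mem hc1 ((hmem _).1 haa))
    · intro a haa; exact (hmem _).2 (C.sub_mem ((hmem _).1 haa) hc1)
    · intro a _; simp
    · intro a _; simp
    · intro a _
      rw [← AddChar.map_add_eq_mul, ← Finset.sum_add_distrib]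
      congr 1
      refine Finset.sum_congr rfl fun i _ => ?_
      simp [mul_add]
  have : (χ (∑ i, u i * c1 i) - 1) * S = 0 := by rw [sub_mul, key, one_mul, sub_self]
  rcases mul_eq_zero.1 this with h | h
  · exfalso
    apply ht
    have h1 : χ (∑ i, u i * c1 i) = 1 := by linear_combination h
    rwa [hb] at h1
  · exact h

end Aux

section Mac

variable {F : Type*} [Field F] [Fintype F] [DecidableEq F] {n : ℕ}

private lemma inner_sum_eval (χ : AddChar F ℂ) (hχ : χ.IsPrimitive) (a : F) (x y : ℂ) :
    ∑ t : F, χ (t * a) * (if t = 0 then x else y) =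
      if a = 0 then x + ((Fintype.card F : ℂ) - 1) * y else x - y := by
  have step : ∀ t : F, χ (t * a) * (if t = 0 then x else y)
      = χ (t * a) * y + (if t = 0 then x - y else 0) := by
    intro t
    by_cases h : t = 0
    · simp [h]
      try ring
    · simp [h]
      try ring
  rw [Finset.sum_congr rfl fun t _ => step t, Finset.sum_add_distrib, ← Finset.sum_mul,
    AddChar.sum_mulShift a hχ, Finset.sum_ite_eq' Finset.univ (0 : F) (fun _ => x - y)]
  simp only [Finset.mem_univ, if_true]
  split_ifs with h <;> ring

private lemma macwilliams_eval (C : Submodule F (Fin n → F)) (hsd : dualCode C = C)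
    (x y : ℂ) :
    ∑ c ∈ (Set.toFinite (C : Set (Fin n → F))).toFinset,
        (x + ((Fintype.card F : ℂ) - 1) * y) ^ (n - hammingNorm c) * (x - y) ^ hammingNorm c
      = ((Set.toFinite (C : Set (Fin n → F))).toFinset.card : ℂ) *
        ∑ c ∈ (Set.toFinite (C : Set (Fin n → F))).toFinset,
          x ^ (n - hammingNorm c) * y ^ hammingNorm c := by
  classical
  set s := (Set.toFinite (C : Set (Fin n → F))).toFinset with hsdef
  have hmem : ∀ c, c ∈ s ↔ c ∈ C := mem_codeFinset C
  set χ := AddChar.FiniteField.primitiveChar_to_Complex F with hχdef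
  have hχ : χ.IsPrimitive := AddChar.FiniteField.primitiveChar_to_Complex_isPrimitive F
  -- step 1: expand each summand as a product of sums
  have step1 : ∀ c : Fin n → F,
      (x + ((Fintype.card F : ℂ) - 1) * y) ^ (n - hammingNorm c) * (x - y) ^ hammingNorm c
      = ∏ i, ∑ t : F, χ (t * c i) * (if t = 0 then x else y) := by
    intro c
    rw [Finset.prod_congr rfl fun i _ => inner_sum_eval χ hχ (c i) x y]
    rw [prod_ite_weight c (x + ((Fintype.card F : ℂ) - 1) * y) (x - y)]
  calc ∑ c ∈ s, (x + ((Fintype.card F : ℂ) - 1) * y) ^ (n - hammingNorm c)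
          * (x - y) ^ hammingNorm c
      = ∑ c ∈ s, ∑ u : Fin n → F,
          χ (∑ i, u i * c i) * (x ^ (n - hammingNorm u) * y ^ hammingNorm u) := by
        refine Finset.sum_congr rfl fun c _ => ?_
        rw [step1 c, Finset.prod_univ_sum]
        rw [Fintype.piFinset_univ]
        refine Finset.sum_congr rfl fun u _ => ?_
        rw [Finset.prod_mul_distrib, ← addChar_map_sum, prod_ite_weight u x y]
    _ = ∑ u : Fin n → F, (∑ c ∈ s, χ (∑ i, u i * c i))
          * (x ^ (n - hammingNorm u) * y ^ hammingNorm u) := by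
        rw [Finset.sum_comm]
        refine Finset.sum_congr rfl fun u _ => ?_
        rw [Finset.sum_mul]
    _ = ∑ u : Fin n → F, (if u ∈ C then ((s.card : ℂ)
          * (x ^ (n - hammingNorm u) * y ^ hammingNorm u)) else 0) := by
        refine Finset.sum_congr rfl fun u _ => ?_
        by_cases h : u ∈ C
        · have h' : u ∈ dualCode C := by rw [hsd]; exact h
          rw [if_pos h, char_sum_mem C χ h']
        · have h' : u ∉ dualCode C := fun hh => h (by rw [← hsd]; exact hh)
          rw [if_neg h, char_sum_not_mem C χ hχ h', zero_mul]
    _ = ∑ u ∈ Finset.univ.filter (· ∈ C), ((s.card : ℂ)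
          * (x ^ (n - hammingNorm u) * y ^ hammingNorm u)) := by
        rw [Finset.sum_filter]
    _ = (s.card : ℂ) * ∑ c ∈ s, x ^ (n - hammingNorm c) * y ^ hammingNorm c := by
        rw [← Finset.mul_sum]
        congr 1
        apply Finset.sum_congr _ fun _ _ => rfl
        ext u
        simp [hmem u]

end Mac

/-- the MacWilliams matrix `q^{-1/2}·[[1, q-1], [1, -1]]` stabilizes the
homogeneous weight enumerator of a self-dual code. -/
theorem self_dual_macwilliams_stabilizer {F : Type*} [Field F] [Fintype F] [DecidableEq F]
    {n : ℕ} (C : Submodule F (Fin n → F)) (hsd : dualCode C = C) :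
    matAct (((Real.sqrt (Fintype.card F) : ℂ))⁻¹ •
        ![![1, (Fintype.card F : ℂ) - 1], ![1, -1]])
      (homWeightEnum ℂ C) = homWeightEnum ℂ C := by
  classical
  have h0s : (0 : Fin n → F) ∈ (Set.toFinite (C : Set (Fin n → F))).toFinset :=
    (mem_codeFinset C 0).2 C.zero_mem
  have hcard0 : (((Set.toFinite (C : Set (Fin n → F))).toFinset.card : ℂ)) ≠ 0 :=
    Nat.cast_ne_zero.2 (Finset.card_pos.2 ⟨0, h0s⟩).ne'
  have hsq : (((Set.toFinite (C : Set (Fin n → F))).toFinset.card : ℂ)) *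
      ((Set.toFinite (C : Set (Fin n → F))).toFinset.card : ℂ) = ((Fintype.card F : ℂ)) ^ n := by
    have h := macwilliams_eval C hsd 1 1
    have hterm : ∀ c ∈ (Set.toFinite (C : Set (Fin n → F))).toFinset,
        ((1:ℂ) + ((Fintype.card F : ℂ) - 1) * 1) ^ (n - hammingNorm c) *
          ((1:ℂ) - 1) ^ hammingNorm c
          = if c = 0 then ((Fintype.card F : ℂ)) ^ n else 0 := by
      intro c _
      rw [sub_self, zero_pow_eq,
        show (1:ℂ) + ((Fintype.card F : ℂ) - 1) * 1 = (Fintype.card F : ℂ) by ring]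
      by_cases h0 : c = 0
      · subst h0
        simp
      · have hn0 : hammingNorm c ≠ 0 := fun hh => h0 (hammingNorm_eq_zero.1 hh)
        simp [h0, hn0]
    rw [Finset.sum_congr rfl hterm,
      Finset.sum_ite_eq' _ 0 (fun _ => ((Fintype.card F : ℂ)) ^ n), if_pos h0s] at h
    simp only [one_pow, mul_one, Finset.sum_const, nsmul_eq_mul] at h
    exact h.symm
  have hr : (Real.sqrt (Fintype.card F)) ^ n
      = (((Set.toFinite (C : Set (Fin n → F))).toFinset.card : ℝ)) := by
    have hnat : (Fintype.card F) ^ n = (Set.toFinite (C : Set (Fin n → F))).toFinset.card *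
        (Set.toFinite (C : Set (Fin n → F))).toFinset.card := by exact_mod_cast hsq.symm
    have h2 : ((Fintype.card F : ℝ)) ^ n
        = (((Set.toFinite (C : Set (Fin n → F))).toFinset.card : ℝ)) ^ 2 := by
      rw [sq]; exact_mod_cast hnat
    have h1 : ((Real.sqrt (Fintype.card F)) ^ n) ^ 2
        = (((Set.toFinite (C : Set (Fin n → F))).toFinset.card : ℝ)) ^ 2 := by
      rw [← pow_mul, mul_comm, pow_mul, Real.sq_sqrt (Nat.cast_nonneg _)]
      exact h2
    have h3 := congrArg Real.sqrt h1
    rwa [Real.sqrt_sq (by positivity), Real.sqrt_sq (Nat.cast_nonneg _)] at h3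
  have hrc : ((Real.sqrt (Fintype.card F) : ℂ)) ^ n
      = (((Set.toFinite (C : Set (Fin n → F))).toFinset.card : ℂ)) := by
    exact_mod_cast congrArg Complex.ofReal hr
  set r := ((Real.sqrt (Fintype.card F) : ℂ))⁻¹ with hrdef
  have hrinv : r ^ n * (((Set.toFinite (C : Set (Fin n → F))).toFinset.card : ℂ)) = 1 := by
    rw [hrdef, inv_pow, hrc, inv_mul_cancel₀ hcard0]
  have e00 : ((r • ![![1, (Fintype.card F : ℂ) - 1], ![1, -1]] : Matrix (Fin 2) (Fin 2) ℂ)) 0 0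
      = r := by
    rw [Pi.smul_apply, Pi.smul_apply,
      show (![![(1:ℂ), (Fintype.card F : ℂ) - 1], ![1, -1]] : Matrix (Fin 2) (Fin 2) ℂ) 0 0 = 1
        from rfl, smul_eq_mul, mul_one]
  have e01 : ((r • ![![1, (Fintype.card F : ℂ) - 1], ![1, -1]] : Matrix (Fin 2) (Fin 2) ℂ)) 0 1
      = r * ((Fintype.card F : ℂ) - 1) := by
    rw [Pi.smul_apply, Pi.smul_apply,
      show (![![(1:ℂ), (Fintype.card F : ℂ) - 1], ![1, -1]] : Matrix (Fin 2) (Fin 2) ℂ) 0 1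
        = (Fintype.card F : ℂ) - 1 from rfl, smul_eq_mul]
  have e10 : ((r • ![![1, (Fintype.card F : ℂ) - 1], ![1, -1]] : Matrix (Fin 2) (Fin 2) ℂ)) 1 0
      = r := by
    rw [Pi.smul_apply, Pi.smul_apply,
      show (![![(1:ℂ), (Fintype.card F : ℂ) - 1], ![1, -1]] : Matrix (Fin 2) (Fin 2) ℂ) 1 0 = 1
        from rfl, smul_eq_mul, mul_one]
  have e11 : ((r • ![![1, (Fintype.card F : ℂ) - 1], ![1, -1]] : Matrix (Fin 2) (Fin 2) ℂ)) 1 1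
      = -r := by
    rw [Pi.smul_apply, Pi.smul_apply,
      show (![![(1:ℂ), (Fintype.card F : ℂ) - 1], ![1, -1]] : Matrix (Fin 2) (Fin 2) ℂ) 1 1 = -1
        from rfl, smul_eq_mul, mul_neg_one]
  unfold matAct homWeightEnum
  rw [map_sum]
  simp only [map_mul, map_pow, MvPolynomial.aeval_X, Fintype.card_fin, e00, e01, e10, e11]
  apply MvPolynomial.funext
  intro z
  simp only [map_sum, map_mul, map_pow, map_add, MvPolynomial.eval_C, MvPolynomial.eval_X]
  have hterm2 : ∀ c ∈ (Set.toFinite (C : Set (Fin n → F))).toFinset,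
      (r * z 0 + r * ((Fintype.card F : ℂ) - 1) * z 1) ^ (n - hammingNorm c) *
        (r * z 0 + -r * z 1) ^ hammingNorm c
        = r ^ n * ((z 0 + ((Fintype.card F : ℂ) - 1) * z 1) ^ (n - hammingNorm c) *
            (z 0 - z 1) ^ hammingNorm c) := by
    intro c _
    have hwt : hammingNorm c ≤ n := by
      simpa using hammingNorm_le_card_fintype (x := c)
    rw [show r * z 0 + r * ((Fintype.card F : ℂ) - 1) * z 1
          = r * (z 0 + ((Fintype.card F : ℂ) - 1) * z 1) by ring,
        show r * z 0 + -r * z 1 = r * (z 0 - z 1) by ring, mul_pow, mul_pow,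
        mul_mul_mul_comm, ← pow_add, Nat.sub_add_cancel hwt]
  rw [Finset.sum_congr rfl hterm2, ← Finset.mul_sum, macwilliams_eval C hsd (z 0) (z 1),
    ← mul_assoc, hrinv, one_mul]
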